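/- Let a, b be elements of GF(2^n), both nonzero, with a ≠ b, a+b ≠ 0, and suppose a^2·b + a·b^2 + a^2 + b^2 + a·b = 0 and a^2 + b^2 + a·b = 1 hold simultaneously. Then a^3 + a + 1 = 0 and b^3 + b + 1 = 0. -/
import Mathlib


theorem stmt_7 {F : Type*} [Field F] [Fintype F] {n : ℕ}
    (hn : 0 < n) (hF : Fintype.card F = 2 ^ n)
    (a b : F) (ha : a ≠ 0) (hb : b ≠ 0) (hne : a ≠ b) (hab : a + b ≠ 0)
    (h1 : a ^ 2 * b + a * b ^ 2 + a ^ 2 + b ^ 2 + a * b = 0)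
    (h2 : a ^ 2 + b ^ 2 + a * b = 1) :
    a ^ 3 + a + 1 = 0 ∧ b ^ 3 + b + 1 = 0 := by
  have hcard : ((Fintype.card F : ℕ) : F) = 0 := FiniteField.cast_card_eq_zero F
  rw [hF] at hcard
  push_cast at hcard
  have h2' : (2 : F) = 0 := pow_eq_zero_iff hn.ne' |>.mp hcard
  constructor
  · linear_combination a * h2 + h1 - h2 + (a - a ^ 2 * b - a * b ^ 2) * h2'
  · linear_combination b * h2 + h1 - h2 + (b - a ^ 2 * b - a * b ^ 2) * h2'
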